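/- arXiv:1807.10701 — 4 statements merged into one kernel-verified Lean document; each statement's English description precedes it below -/
import Mathlib

section
/- Let M > 1. There exists a constant C = C(M) such that for every λ > 0 and all symmetric 2×2 matrices A, B with |A| ≤ M|B|, one has g_λ(A) ≤ C·g_λ(B). -/
open Matrix

/-- Eigenvalue τ₁ of a symmetric 2×2 real matrix (larger root). -/
noncomputable def tau1 (ξ : Matrix (Fin 2) (Fin 2) ℝ) : ℝ :=
  ((ξ 0 0 + ξ 1 1) + Real.sqrt ((ξ 0 0 - ξ 1 1) ^ 2 + 4 * (ξ 0 1) ^ 2)) / 2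

/-- Eigenvalue τ₂ of a symmetric 2×2 real matrix (smaller root). -/
noncomputable def tau2 (ξ : Matrix (Fin 2) (Fin 2) ℝ) : ℝ :=
  ((ξ 0 0 + ξ 1 1) - Real.sqrt ((ξ 0 0 - ξ 1 1) ^ 2 + 4 * (ξ 0 1) ^ 2)) / 2

/-- ρ⁰(ξ) = |τ₁(ξ)| + |τ₂(ξ)|. -/
noncomputable def rho0 (ξ : Matrix (Fin 2) (Fin 2) ℝ) : ℝ := |tau1 ξ| + |tau2 ξ|

/-- Frobenius norm of a 2×2 matrix. -/
noncomputable def frob (ξ : Matrix (Fin 2) (Fin 2) ℝ) : ℝ :=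
  Real.sqrt (∑ i, ∑ j, (ξ i j) ^ 2)

/-- The function g_λ. -/
noncomputable def gl (l : ℝ) (ξ : Matrix (Fin 2) (Fin 2) ℝ) : ℝ :=
  if rho0 ξ ≤ Real.sqrt l then 2 * (rho0 ξ - |ξ.det| / Real.sqrt l)
  else (frob ξ) ^ 2 / Real.sqrt l + Real.sqrt l

lemma frob_nonneg (ξ : Matrix (Fin 2) (Fin 2) ℝ) : 0 ≤ frob ξ := Real.sqrt_nonneg _

lemma rho0_nonneg (ξ : Matrix (Fin 2) (Fin 2) ℝ) : 0 ≤ rho0 ξ :=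
  add_nonneg (abs_nonneg _) (abs_nonneg _)

lemma aux_sq (ξ : Matrix (Fin 2) (Fin 2) ℝ) (hs : ξ 1 0 = ξ 0 1) :
    rho0 ξ ^ 2 = frob ξ ^ 2 + 2 * |ξ.det| ∧ rho0 ξ ^ 2 ≤ 2 * frob ξ ^ 2 := by
  have hfrob : frob ξ ^ 2 = ξ 0 0 ^ 2 + 2 * (ξ 0 1) ^ 2 + ξ 1 1 ^ 2 := by
    unfold frob
    rw [Real.sq_sqrt (by positivity)]
    simp [Fin.sum_univ_two, hs]; ring
  have hdet : ξ.det = ξ 0 0 * ξ 1 1 - ξ 0 1 ^ 2 := by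
    rw [Matrix.det_fin_two, hs]; ring
  set a := ξ 0 0
  set b := ξ 0 1
  set d := ξ 1 1
  set s := Real.sqrt ((a - d) ^ 2 + 4 * b ^ 2) with hsdef
  have hs2 : s ^ 2 = (a - d) ^ 2 + 4 * b ^ 2 := Real.sq_sqrt (by positivity)
  have habs : |((a + d) + s) / 2| * |((a + d) - s) / 2| = |ξ.det| := by
    rw [← abs_mul, hdet]
    congr 1
    nlinarith [hs2]
  have hrho : rho0 ξ = |((a + d) + s) / 2| + |((a + d) - s) / 2| := rfl
  have hexp : rho0 ξ ^ 2 = frob ξ ^ 2 + 2 * |ξ.det| := by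
    rw [hrho]
    have h1 : (|((a + d) + s) / 2| + |((a + d) - s) / 2|) ^ 2
        = (((a + d) + s) / 2) ^ 2 + (((a + d) - s) / 2) ^ 2
          + 2 * (|((a + d) + s) / 2| * |((a + d) - s) / 2|) := by
      rw [add_sq, sq_abs, sq_abs]; ring
    rw [h1, habs, hfrob]
    nlinarith [hs2]
  refine ⟨hexp, ?_⟩
  have hDbound : |ξ.det| ≤ frob ξ ^ 2 / 2 := by
    rw [hdet, hfrob]
    rw [abs_le]
    constructor <;> nlinarith [sq_nonneg (a + d), sq_nonneg (a - d), sq_nonneg b]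
  linarith

set_option maxHeartbeats 1600000 in
lemma core (σ c ρA FA DA ρB FB DB : ℝ) (hσ : 0 < σ) (hc : 1 ≤ c)
    (hρA0 : 0 ≤ ρA) (hρB0 : 0 ≤ ρB) (hDA0 : 0 ≤ DA) (hDB0 : 0 ≤ DB)
    (hA1 : ρA ^ 2 = FA ^ 2 + 2 * DA) (hA2 : ρA ^ 2 ≤ 2 * FA ^ 2)
    (hB1 : ρB ^ 2 = FB ^ 2 + 2 * DB) (hB2 : ρB ^ 2 ≤ 2 * FB ^ 2)
    (hle : ρA ≤ c * ρB) :
    (if ρA ≤ σ then 2 * (ρA - DA / σ) else FA ^ 2 / σ + σ)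
      ≤ 4 * c ^ 2 * (if ρB ≤ σ then 2 * (ρB - DB / σ) else FB ^ 2 / σ + σ) := by
  have hσ' : σ ≠ 0 := hσ.ne'
  have hc0 : (0:ℝ) < c := lt_of_lt_of_le zero_lt_one hc
  split_ifs with h1 h2 h2
  · -- both small
    have hx : 0 ≤ DA / σ := div_nonneg hDA0 hσ.le
    have hy : DB / σ ≤ ρB / 4 := by
      rw [div_le_div_iff₀ hσ (by norm_num)]
      nlinarith
    nlinarith [mul_le_mul_of_nonneg_left hy (sq_nonneg c),
      mul_nonneg (mul_nonneg hc0.le (by linarith : (0:ℝ) ≤ c - 1)) hρB0,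
      mul_nonneg (sq_nonneg c) hρB0]
  · -- A small, B large
    push_neg at h2
    have hx : 0 ≤ DA / σ := div_nonneg hDA0 hσ.le
    have key : 2 * ρA * σ ≤ 4 * c ^ 2 * (FB ^ 2 + σ * σ) := by
      nlinarith [mul_le_mul_of_nonneg_right hle hσ.le,
        mul_le_mul_of_nonneg_left h2.le (mul_nonneg hc0.le hρB0),
        mul_le_mul_of_nonneg_left hB2 hc0.le,
        mul_le_mul_of_nonneg_left hB2 (mul_nonneg hc0.le hc0.le),
        mul_nonneg (mul_nonneg (mul_nonneg hc0.le (by linarith : (0:ℝ) ≤ c - 1)) hρB0) hρB0,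
        sq_nonneg σ, mul_pos hσ hσ, mul_nonneg (sq_nonneg c) (sq_nonneg σ)]
    have h2ρA : 2 * ρA ≤ 4 * c ^ 2 * (FB ^ 2 + σ * σ) / σ := by
      rw [le_div_iff₀ hσ]; linarith
    calc 2 * (ρA - DA / σ) ≤ 2 * ρA := by linarith
      _ ≤ 4 * c ^ 2 * (FB ^ 2 + σ * σ) / σ := h2ρA
      _ = 4 * c ^ 2 * ((FB ^ 2 + σ * σ) / σ) := by ring
      _ = 4 * c ^ 2 * (FB ^ 2 / σ + σ) := by rw [div_add' _ _ _ hσ']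
  · -- A large, B small
    push_neg at h1
    have hFA : FA ^ 2 ≤ ρA ^ 2 := by linarith
    have hcρB : 0 ≤ c * ρB := mul_nonneg hc0.le hρB0
    have hρA2 : ρA ^ 2 ≤ c ^ 2 * ρB ^ 2 := by
      have h' : 0 ≤ (c * ρB - ρA) * (c * ρB + ρA) :=
        mul_nonneg (by linarith) (by linarith)
      nlinarith [h']
    have hy : DB / σ ≤ ρB / 4 := by
      rw [div_le_div_iff₀ hσ (by norm_num)]
      nlinarith
    have hσ2 : σ * σ ≤ ρA ^ 2 := by nlinarith
    have hρBσ : ρB ^ 2 / σ ≤ ρB := by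
      rw [div_le_iff₀ hσ]; nlinarith
    have hL : FA ^ 2 / σ + σ ≤ 2 * (c ^ 2 * (ρB ^ 2 / σ)) := by
      have : 2 * (c ^ 2 * (ρB ^ 2 / σ)) = 2 * c ^ 2 * ρB ^ 2 / σ := by ring
      rw [this, div_add' _ _ _ hσ', div_le_div_iff₀ hσ hσ]
      nlinarith [mul_le_mul_of_nonneg_right hFA hσ.le,
        mul_le_mul_of_nonneg_right hρA2 hσ.le,
        mul_le_mul_of_nonneg_right hσ2 hσ.le]
    have hR : 2 * (c ^ 2 * (ρB ^ 2 / σ)) ≤ 4 * c ^ 2 * (2 * (ρB - DB / σ)) := by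
      linarith [mul_le_mul_of_nonneg_left hy (sq_nonneg c),
        mul_le_mul_of_nonneg_left hρBσ (sq_nonneg c),
        mul_nonneg (sq_nonneg c) hρB0]
    linarith
  · -- both large
    push_neg at h1
    have hFA : FA ^ 2 ≤ ρA ^ 2 := by linarith
    have hcρB : 0 ≤ c * ρB := mul_nonneg hc0.le hρB0
    have hρA2 : ρA ^ 2 ≤ c ^ 2 * ρB ^ 2 := by
      have h' : 0 ≤ (c * ρB - ρA) * (c * ρB + ρA) :=
        mul_nonneg (by linarith) (by linarith)
      nlinarith [h']
    have hc2 : 1 ≤ c ^ 2 := by nlinarith [hc]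
    have hmain : FA ^ 2 + σ * σ ≤ 4 * c ^ 2 * (FB ^ 2 + σ * σ) := by
      linarith [mul_le_mul_of_nonneg_left hB2 (sq_nonneg c),
        mul_nonneg (by linarith : (0:ℝ) ≤ c ^ 2 - 1) (mul_pos hσ hσ).le,
        mul_pos hσ hσ,
        mul_nonneg (sq_nonneg c) (sq_nonneg FB)]
    calc FA ^ 2 / σ + σ = (FA ^ 2 + σ * σ) / σ := by rw [div_add' _ _ _ hσ']
      _ ≤ 4 * c ^ 2 * (FB ^ 2 + σ * σ) / σ := (div_le_div_iff_of_pos_right hσ).mpr hmain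
      _ = 4 * c ^ 2 * (FB ^ 2 / σ + σ) := by
          rw [mul_div_assoc, div_add' _ _ _ hσ']

lemma le_of_sq_le_sq' {x y : ℝ} (hx : 0 ≤ x) (hy : 0 ≤ y) (h : x ^ 2 ≤ y ^ 2) : x ≤ y := by
  have := Real.sqrt_le_sqrt h
  rwa [Real.sqrt_sq hx, Real.sqrt_sq hy] at this

theorem stmt4 (M : ℝ) (hM : 1 < M) :
    ∃ C : ℝ, 0 < C ∧ ∀ (l : ℝ), 0 < l → ∀ A B : Matrix (Fin 2) (Fin 2) ℝ,
      A.IsSymm → B.IsSymm → frob A ≤ M * frob B → gl l A ≤ C * gl l B := by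
  refine ⟨8 * M ^ 2, by nlinarith, ?_⟩
  intro l hl A B hA hB hAB
  have hσ : 0 < Real.sqrt l := Real.sqrt_pos.mpr hl
  obtain ⟨hA1, hA2⟩ := aux_sq A (hA.apply 0 1)
  obtain ⟨hB1, hB2⟩ := aux_sq B (hB.apply 0 1)
  have h2 : (1:ℝ) ≤ Real.sqrt 2 := by
    rw [show (1:ℝ) = Real.sqrt 1 from Real.sqrt_one.symm]
    exact Real.sqrt_le_sqrt (by norm_num)
  have hs2 : Real.sqrt 2 ^ 2 = 2 := Real.sq_sqrt (by norm_num)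
  set c := Real.sqrt 2 * M with hcdef
  have hc : 1 ≤ c := by nlinarith
  have hAF : rho0 A ≤ Real.sqrt 2 * frob A := by
    apply le_of_sq_le_sq' (rho0_nonneg A)
      (mul_nonneg (Real.sqrt_nonneg 2) (frob_nonneg A))
    rw [mul_pow, hs2]; exact hA2
  have hBF : frob B ≤ rho0 B := by
    apply le_of_sq_le_sq' (frob_nonneg B) (rho0_nonneg B)
    nlinarith [abs_nonneg B.det]
  have hle : rho0 A ≤ c * rho0 B := by
    calc rho0 A ≤ Real.sqrt 2 * frob A := hAF
      _ ≤ Real.sqrt 2 * (M * frob B) := by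
          apply mul_le_mul_of_nonneg_left hAB (Real.sqrt_nonneg 2)
      _ ≤ Real.sqrt 2 * (M * rho0 B) := by
          apply mul_le_mul_of_nonneg_left ?_ (Real.sqrt_nonneg 2)
          exact mul_le_mul_of_nonneg_left hBF (by linarith)
      _ = c * rho0 B := by ring
  have key := core (Real.sqrt l) c (rho0 A) (frob A) |A.det| (rho0 B) (frob B)
    |B.det| hσ hc (rho0_nonneg A) (rho0_nonneg B) (abs_nonneg _) (abs_nonneg _)
    hA1 hA2 hB1 hB2 hle
  have hc2 : 4 * c ^ 2 = 8 * M ^ 2 := by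
    rw [hcdef, mul_pow, hs2]; ring
  rw [← hc2]
  show (if rho0 A ≤ Real.sqrt l then 2 * (rho0 A - |A.det| / Real.sqrt l)
    else (frob A) ^ 2 / Real.sqrt l + Real.sqrt l) ≤ _
  exact key
end

section
/- There is a constant C such that for every λ > 0 and all symmetric 2×2 matrices A, B: |g_λ(A) - g_λ(B)| ≤ C|A-B|·(1 + (|A|+|B|)/√λ). -/
open Matrix

noncomputable def mvec (ξ : Matrix (Fin 2) (Fin 2) ℝ) : EuclideanSpace ℝ (Fin 2 × Fin 2) :=
  WithLp.toLp 2 (fun p : Fin 2 × Fin 2 => ξ p.1 p.2)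

lemma mvec_sub (A B : Matrix (Fin 2) (Fin 2) ℝ) : mvec (A - B) = mvec A - mvec B := by
  ext p; simp [mvec, Matrix.sub_apply]

lemma frob_eq_norm (ξ : Matrix (Fin 2) (Fin 2) ℝ) : frob ξ = ‖mvec ξ‖ := by
  rw [EuclideanSpace.norm_eq, frob]
  congr 1
  simp [Fintype.sum_prod_type, mvec, Real.norm_eq_abs, sq_abs]

lemma frob_sub_comm (A B : Matrix (Fin 2) (Fin 2) ℝ) : frob (B - A) = frob (A - B) := by
  rw [frob_eq_norm, frob_eq_norm, mvec_sub, mvec_sub, ← norm_neg]; congr 1; abel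

lemma abs_frob_sub_frob (A B : Matrix (Fin 2) (Fin 2) ℝ) :
    |frob A - frob B| ≤ frob (A - B) := by
  rw [frob_eq_norm, frob_eq_norm, frob_eq_norm, mvec_sub]
  exact abs_norm_sub_norm_le _ _

lemma entry_le_frob (ξ : Matrix (Fin 2) (Fin 2) ℝ) (i j : Fin 2) : |ξ i j| ≤ frob ξ := by
  rw [← Real.sqrt_sq_eq_abs, frob]
  apply Real.sqrt_le_sqrt
  fin_cases i <;> fin_cases j <;>
    simp [Fin.sum_univ_two] <;>
    nlinarith [sq_nonneg (ξ 0 0), sq_nonneg (ξ 0 1), sq_nonneg (ξ 1 0), sq_nonneg (ξ 1 1)]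

lemma sqrt_add_sq_le (x y : ℝ) : Real.sqrt (x ^ 2 + y ^ 2) ≤ |x| + |y| := by
  rw [show |x| + |y| = Real.sqrt ((|x| + |y|) ^ 2) by
    rw [Real.sqrt_sq (by positivity)]]
  apply Real.sqrt_le_sqrt
  nlinarith [abs_nonneg x, abs_nonneg y, sq_abs x, sq_abs y]

noncomputable def disc (ξ : Matrix (Fin 2) (Fin 2) ℝ) : ℝ :=
  Real.sqrt ((ξ 0 0 - ξ 1 1) ^ 2 + 4 * (ξ 0 1) ^ 2)

noncomputable def dvec (ξ : Matrix (Fin 2) (Fin 2) ℝ) : EuclideanSpace ℝ (Fin 2) :=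
  WithLp.toLp 2 ![ξ 0 0 - ξ 1 1, 2 * ξ 0 1]

lemma dvec_norm (ξ : Matrix (Fin 2) (Fin 2) ℝ) : ‖dvec ξ‖ = disc ξ := by
  rw [EuclideanSpace.norm_eq, disc]
  congr 1
  simp [dvec, Fin.sum_univ_two, Real.norm_eq_abs, sq_abs]
  ring

lemma dvec_sub (A B : Matrix (Fin 2) (Fin 2) ℝ) : dvec (A - B) = dvec A - dvec B := by
  ext i
  fin_cases i <;> simp [dvec, Matrix.sub_apply] <;> ring

lemma disc_le (ξ : Matrix (Fin 2) (Fin 2) ℝ) : disc ξ ≤ |ξ 0 0| + |ξ 1 1| + 2 * |ξ 0 1| := by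
  have h : disc ξ ≤ |ξ 0 0 - ξ 1 1| + |2 * ξ 0 1| := by
    rw [disc, show (ξ 0 0 - ξ 1 1) ^ 2 + 4 * ξ 0 1 ^ 2 = (ξ 0 0 - ξ 1 1) ^ 2 + (2 * ξ 0 1) ^ 2 by ring]
    exact sqrt_add_sq_le _ _
  calc disc ξ ≤ |ξ 0 0 - ξ 1 1| + |2 * ξ 0 1| := h
    _ ≤ |ξ 0 0| + |ξ 1 1| + 2 * |ξ 0 1| := by
        rw [abs_mul]
        have := abs_sub (ξ 0 0) (ξ 1 1)
        simp at this ⊢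
        linarith [abs_sub_abs_le_abs_sub (ξ 0 0) (ξ 1 1), abs_sub (ξ 0 0) (ξ 1 1)]

lemma abs_disc_sub_disc (A B : Matrix (Fin 2) (Fin 2) ℝ) :
    |disc A - disc B| ≤ disc (A - B) := by
  rw [← dvec_norm, ← dvec_norm, ← dvec_norm, dvec_sub]
  exact abs_norm_sub_norm_le _ _

lemma disc_nonneg (ξ : Matrix (Fin 2) (Fin 2) ℝ) : 0 ≤ disc ξ := Real.sqrt_nonneg _

lemma disc_le_frob (ξ : Matrix (Fin 2) (Fin 2) ℝ) : disc ξ ≤ 4 * frob ξ := by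
  have := disc_le ξ
  have h1 := entry_le_frob ξ 0 0
  have h2 := entry_le_frob ξ 1 1
  have h3 := entry_le_frob ξ 0 1
  linarith

lemma tau1_eq (ξ : Matrix (Fin 2) (Fin 2) ℝ) : tau1 ξ = ((ξ 0 0 + ξ 1 1) + disc ξ) / 2 := rfl
lemma tau2_eq (ξ : Matrix (Fin 2) (Fin 2) ℝ) : tau2 ξ = ((ξ 0 0 + ξ 1 1) - disc ξ) / 2 := rfl

lemma rho0_lip (A B : Matrix (Fin 2) (Fin 2) ℝ) :
    |rho0 A - rho0 B| ≤ 6 * frob (A - B) := by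
  have hd : |disc A - disc B| ≤ 4 * frob (A - B) :=
    (abs_disc_sub_disc A B).trans (disc_le_frob _)
  have ht : |(A 0 0 + A 1 1) - (B 0 0 + B 1 1)| ≤ 2 * frob (A - B) := by
    have h1 := entry_le_frob (A - B) 0 0
    have h2 := entry_le_frob (A - B) 1 1
    simp [Matrix.sub_apply] at h1 h2
    calc |(A 0 0 + A 1 1) - (B 0 0 + B 1 1)| = |(A 0 0 - B 0 0) + (A 1 1 - B 1 1)| := by ring_nf
      _ ≤ |A 0 0 - B 0 0| + |A 1 1 - B 1 1| := abs_add_le _ _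
      _ ≤ 2 * frob (A - B) := by linarith
  have h1 : |tau1 A - tau1 B| ≤ 3 * frob (A - B) := by
    have e1 : tau1 A - tau1 B
        = (((A 0 0 + A 1 1) - (B 0 0 + B 1 1)) + (disc A - disc B)) / 2 := by
      rw [tau1_eq, tau1_eq]; ring
    rw [e1]
    have := abs_add_le ((A 0 0 + A 1 1) - (B 0 0 + B 1 1)) (disc A - disc B)
    rw [abs_div, abs_of_nonneg (by norm_num : (0:ℝ) ≤ 2)]
    linarith
  have h2 : |tau2 A - tau2 B| ≤ 3 * frob (A - B) := by
    have e1 : tau2 A - tau2 B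
        = (((A 0 0 + A 1 1) - (B 0 0 + B 1 1)) + -(disc A - disc B)) / 2 := by
      rw [tau2_eq, tau2_eq]; ring
    rw [e1]
    have := abs_add_le ((A 0 0 + A 1 1) - (B 0 0 + B 1 1)) (-(disc A - disc B))
    rw [abs_neg] at this
    rw [abs_div, abs_of_nonneg (by norm_num : (0:ℝ) ≤ 2)]
    linarith
  calc |rho0 A - rho0 B| = |(|tau1 A| - |tau1 B|) + (|tau2 A| - |tau2 B|)| := by
        rw [rho0, rho0]; ring_nf
    _ ≤ |(|tau1 A| - |tau1 B|)| + |(|tau2 A| - |tau2 B|)| := abs_add_le _ _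
    _ ≤ |tau1 A - tau1 B| + |tau2 A - tau2 B| :=
        add_le_add (abs_abs_sub_abs_le_abs_sub _ _) (abs_abs_sub_abs_le_abs_sub _ _)
    _ ≤ 6 * frob (A - B) := by linarith

lemma rho0_le_frob (ξ : Matrix (Fin 2) (Fin 2) ℝ) : rho0 ξ ≤ 6 * frob ξ := by
  have hd := disc_le_frob ξ
  have hd0 := disc_nonneg ξ
  have h1 := entry_le_frob ξ 0 0
  have h2 := entry_le_frob ξ 1 1
  have hab := abs_add_le (ξ 0 0 + ξ 1 1) (disc ξ)
  have hab2 := abs_add_le (ξ 0 0 + ξ 1 1) (-(disc ξ))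
  rw [abs_neg] at hab2
  rw [abs_of_nonneg hd0] at hab hab2
  have habs := abs_add_le (ξ 0 0) (ξ 1 1)
  have ha : |tau1 ξ| ≤ 3 * frob ξ := by
    rw [tau1_eq, abs_div, abs_of_nonneg (by norm_num : (0:ℝ) ≤ 2)]
    linarith
  have hb : |tau2 ξ| ≤ 3 * frob ξ := by
    rw [tau2_eq, sub_eq_add_neg, abs_div, abs_of_nonneg (by norm_num : (0:ℝ) ≤ 2)]
    linarith
  rw [rho0]; linarith

lemma disc_sq (ξ : Matrix (Fin 2) (Fin 2) ℝ) :
    disc ξ ^ 2 = (ξ 0 0 - ξ 1 1) ^ 2 + 4 * (ξ 0 1) ^ 2 := by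
  rw [disc, Real.sq_sqrt (by positivity)]

lemma frob_sq (ξ : Matrix (Fin 2) (Fin 2) ℝ) :
    frob ξ ^ 2 = ξ 0 0 ^ 2 + ξ 0 1 ^ 2 + ξ 1 0 ^ 2 + ξ 1 1 ^ 2 := by
  rw [frob, Real.sq_sqrt (by positivity)]
  simp [Fin.sum_univ_two]
  ring

lemma tau_mul (ξ : Matrix (Fin 2) (Fin 2) ℝ) (hξ : ξ.IsSymm) :
    tau1 ξ * tau2 ξ = ξ.det := by
  have h10 : ξ 1 0 = ξ 0 1 := hξ.apply 0 1
  rw [tau1_eq, tau2_eq, Matrix.det_fin_two, h10]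
  have := disc_sq ξ
  nlinarith [disc_sq ξ]

lemma tau_sq_add (ξ : Matrix (Fin 2) (Fin 2) ℝ) (hξ : ξ.IsSymm) :
    tau1 ξ ^ 2 + tau2 ξ ^ 2 = frob ξ ^ 2 := by
  have h10 : ξ 1 0 = ξ 0 1 := hξ.apply 0 1
  rw [tau1_eq, tau2_eq, frob_sq, h10]
  nlinarith [disc_sq ξ]

lemma rho0_sq (ξ : Matrix (Fin 2) (Fin 2) ℝ) (hξ : ξ.IsSymm) :
    rho0 ξ ^ 2 = frob ξ ^ 2 + 2 * |ξ.det| := by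
  rw [rho0, ← tau_sq_add ξ hξ, ← tau_mul ξ hξ, add_sq, sq_abs, sq_abs, abs_mul]
  ring

lemma det_lip (A B : Matrix (Fin 2) (Fin 2) ℝ) :
    |A.det - B.det| ≤ 2 * frob (A - B) * (frob A + frob B) := by
  have h : A.det - B.det
      = (A 0 0 - B 0 0) * A 1 1 + B 0 0 * (A 1 1 - B 1 1)
        - ((A 0 1 - B 0 1) * A 1 0 + B 0 1 * (A 1 0 - B 1 0)) := by
    rw [Matrix.det_fin_two, Matrix.det_fin_two]; ring
  have hsub : ∀ i j : Fin 2, |A i j - B i j| ≤ frob (A - B) := by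
    intro i j
    have := entry_le_frob (A - B) i j
    simpa [Matrix.sub_apply] using this
  have p1 : |(A 0 0 - B 0 0) * A 1 1| ≤ frob (A - B) * frob A := by
    rw [abs_mul]; exact mul_le_mul (hsub 0 0) (entry_le_frob A 1 1) (abs_nonneg _) (frob_nonneg _)
  have p2 : |B 0 0 * (A 1 1 - B 1 1)| ≤ frob B * frob (A - B) := by
    rw [abs_mul]; exact mul_le_mul (entry_le_frob B 0 0) (hsub 1 1) (abs_nonneg _) (frob_nonneg _)
  have p3 : |(A 0 1 - B 0 1) * A 1 0| ≤ frob (A - B) * frob A := by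
    rw [abs_mul]; exact mul_le_mul (hsub 0 1) (entry_le_frob A 1 0) (abs_nonneg _) (frob_nonneg _)
  have p4 : |B 0 1 * (A 1 0 - B 1 0)| ≤ frob B * frob (A - B) := by
    rw [abs_mul]; exact mul_le_mul (entry_le_frob B 0 1) (hsub 1 0) (abs_nonneg _) (frob_nonneg _)
  calc |A.det - B.det|
      ≤ |(A 0 0 - B 0 0) * A 1 1| + |B 0 0 * (A 1 1 - B 1 1)|
        + (|(A 0 1 - B 0 1) * A 1 0| + |B 0 1 * (A 1 0 - B 1 0)|) := by
        rw [h]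
        exact (abs_sub _ _).trans (add_le_add (abs_add_le _ _) (abs_add_le _ _))
    _ ≤ 2 * frob (A - B) * (frob A + frob B) := by nlinarith

theorem stmt5 :
    ∃ C : ℝ, 0 < C ∧ ∀ (l : ℝ), 0 < l → ∀ A B : Matrix (Fin 2) (Fin 2) ℝ,
      A.IsSymm → B.IsSymm →
      |gl l A - gl l B| ≤
        C * frob (A - B) * (1 + (frob A + frob B) / Real.sqrt l) := by
  refine ⟨100, by norm_num, fun l hl A B hA hB => ?_⟩
  set s := Real.sqrt l with hs_def
  have hs : 0 < s := Real.sqrt_pos.mpr hl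
  set e := frob (A - B) with he_def
  have he : 0 ≤ e := frob_nonneg _
  have hfA : 0 ≤ frob A := frob_nonneg A
  have hfB : 0 ≤ frob B := frob_nonneg B
  -- key Lipschitz bounds
  have hr := rho0_lip A B
  have hdet : |(|A.det| - |B.det|)| ≤ 2 * e * (frob A + frob B) :=
    (abs_abs_sub_abs_le_abs_sub _ _).trans (det_lip A B)
  have hfrsq : |frob A ^ 2 - frob B ^ 2| ≤ e * (frob A + frob B) := by
    have h1 : frob A ^ 2 - frob B ^ 2 = (frob A - frob B) * (frob A + frob B) := by ring
    rw [h1, abs_mul, abs_of_nonneg (show (0:ℝ) ≤ frob A + frob B by linarith)]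
    exact mul_le_mul_of_nonneg_right (abs_frob_sub_frob A B) (by linarith)
  -- reduce to multiplied-out form
  rw [show (100:ℝ) * e * (1 + (frob A + frob B) / s)
      = (100 * e * s + 100 * e * (frob A + frob B)) / s by field_simp,
    le_div_iff₀ hs]
  have habs : ∀ x : ℝ, |x| * s = |x * s| := by
    intro x; rw [abs_mul, abs_of_pos hs]
  -- bound on the "first branch difference" times s
  have hD1 : |2 * s * (rho0 A - rho0 B) - 2 * (|A.det| - |B.det|)|
      ≤ 12 * e * s + 4 * e * (frob A + frob B) := by
    calc |2 * s * (rho0 A - rho0 B) - 2 * (|A.det| - |B.det|)|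
        ≤ |2 * s * (rho0 A - rho0 B)| + |2 * (|A.det| - |B.det|)| := abs_sub _ _
      _ = 2 * s * |rho0 A - rho0 B| + 2 * |(|A.det| - |B.det|)| := by
          rw [abs_mul, abs_mul, abs_mul, abs_of_pos hs]
          norm_num
      _ ≤ 12 * e * s + 4 * e * (frob A + frob B) := by
          nlinarith [mul_le_mul_of_nonneg_left hr hs.le]
  rw [gl, gl, ← hs_def]
  split_ifs with h1 h2 h2
  · -- both first branch
    rw [habs]
    rw [show (2 * (rho0 A - |A.det| / s) - 2 * (rho0 B - |B.det| / s)) * s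
        = 2 * s * (rho0 A - rho0 B) - 2 * (|A.det| - |B.det|) by field_simp; ring]
    nlinarith [hD1, mul_nonneg he hs.le, mul_nonneg he (add_nonneg hfA hfB)]
  · -- A first branch, B second branch
    have hb2 : s < rho0 B := not_le.mp h2
    have hBA : rho0 B - rho0 A ≤ 6 * e := by
      have := le_abs_self (rho0 B - rho0 A)
      rw [abs_sub_comm] at this
      linarith
    have hq : (rho0 B - s) ^ 2 ≤ 36 * e * frob B := by
      have h6 : rho0 B ≤ 6 * frob B := rho0_le_frob B
      nlinarith
    rw [habs]
    rw [show (2 * (rho0 A - |A.det| / s) - (frob B ^ 2 / s + s)) * s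
        = 2 * s * rho0 A - 2 * |A.det| - frob B ^ 2 - s ^ 2 by field_simp; ring]
    have key : 2 * s * rho0 A - 2 * |A.det| - frob B ^ 2 - s ^ 2
        = (2 * s * (rho0 A - rho0 B) - 2 * (|A.det| - |B.det|)) - (rho0 B - s) ^ 2 := by
      have hB2 := rho0_sq B hB
      linear_combination hB2
    rw [key]
    have := (abs_sub (2 * s * (rho0 A - rho0 B) - 2 * (|A.det| - |B.det|)) ((rho0 B - s) ^ 2))
    rw [abs_of_nonneg (sq_nonneg (rho0 B - s))] at this
    nlinarith [mul_nonneg he hs.le, mul_nonneg he hfA, mul_nonneg he hfB]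
  · -- A second branch, B first branch
    have hb2 : s < rho0 A := not_le.mp h1
    have hAB : rho0 A - rho0 B ≤ 6 * e := by
      have := le_abs_self (rho0 A - rho0 B)
      linarith
    have hq : (rho0 A - s) ^ 2 ≤ 36 * e * frob A := by
      have h6 : rho0 A ≤ 6 * frob A := rho0_le_frob A
      nlinarith
    rw [habs]
    rw [show (frob A ^ 2 / s + s - 2 * (rho0 B - |B.det| / s)) * s
        = frob A ^ 2 + s ^ 2 - 2 * s * rho0 B + 2 * |B.det| by field_simp; ring]
    have key : frob A ^ 2 + s ^ 2 - 2 * s * rho0 B + 2 * |B.det|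
        = (2 * s * (rho0 A - rho0 B) - 2 * (|A.det| - |B.det|)) + (rho0 A - s) ^ 2 := by
      have hA2 := rho0_sq A hA
      linear_combination -hA2
    rw [key]
    have := abs_add_le (2 * s * (rho0 A - rho0 B) - 2 * (|A.det| - |B.det|)) ((rho0 A - s) ^ 2)
    rw [abs_of_nonneg (sq_nonneg (rho0 A - s))] at this
    nlinarith [mul_nonneg he hs.le, mul_nonneg he hfA, mul_nonneg he hfB]
  · -- both second branch
    rw [habs]
    rw [show (frob A ^ 2 / s + s - (frob B ^ 2 / s + s)) * s
        = frob A ^ 2 - frob B ^ 2 by field_simp; ring]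
    nlinarith [mul_nonneg he hs.le, mul_nonneg he (add_nonneg hfA hfB)]
end

section
/- For every λ > 0 and every symmetric 2×2 matrix ξ, one has g_λ(ξ) ≥ 2|ξ|_∞, where |ξ|_∞ = max(|τ₁(ξ)|, |τ₂(ξ)|) is the operator norm. -/
open Matrix

/-- Operator norm |ξ|_∞ = max(|τ₁|,|τ₂|). -/
noncomputable def opn (ξ : Matrix (Fin 2) (Fin 2) ℝ) : ℝ := max |tau1 ξ| |tau2 ξ|

theorem stmt6 (l : ℝ) (hl : 0 < l) (ξ : Matrix (Fin 2) (Fin 2) ℝ) (hξ : ξ.IsSymm) :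
    2 * opn ξ ≤ gl l ξ := by
  have hsym : ξ 1 0 = ξ 0 1 := hξ.apply 0 1
  have hsl : 0 < Real.sqrt l := Real.sqrt_pos.mpr hl
  have hd2 : Real.sqrt ((ξ 0 0 - ξ 1 1) ^ 2 + 4 * (ξ 0 1) ^ 2) ^ 2
      = (ξ 0 0 - ξ 1 1) ^ 2 + 4 * (ξ 0 1) ^ 2 := Real.sq_sqrt (by positivity)
  have hdet : ξ.det = tau1 ξ * tau2 ξ := by
    rw [Matrix.det_fin_two, hsym, tau1, tau2]
    nlinarith [hd2]
  have hfrob : (frob ξ) ^ 2 = tau1 ξ ^ 2 + tau2 ξ ^ 2 := by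
    have : (frob ξ) ^ 2 = ξ 0 0 ^ 2 + ξ 0 1 ^ 2 + (ξ 1 0 ^ 2 + ξ 1 1 ^ 2) := by
      rw [frob, Real.sq_sqrt (by positivity)]
      simp [Fin.sum_univ_two]
    rw [this, hsym, tau1, tau2]
    nlinarith [hd2]
  have h1 : 0 ≤ |tau1 ξ| := abs_nonneg _
  have h2 : 0 ≤ |tau2 ξ| := abs_nonneg _
  unfold gl opn
  split_ifs with h
  · rw [rho0] at h ⊢
    rw [hdet, abs_mul]
    rcases max_cases |tau1 ξ| |tau2 ξ| with ⟨he, hge⟩ | ⟨he, hge⟩ <;> rw [he] <;>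
      [ (have hb : |tau1 ξ| * |tau2 ξ| / Real.sqrt l ≤ |tau2 ξ| := by
          rw [div_le_iff₀ hsl]; nlinarith);
        (have hb : |tau1 ξ| * |tau2 ξ| / Real.sqrt l ≤ |tau1 ξ| := by
          rw [div_le_iff₀ hsl]; nlinarith) ] <;> linarith
  · rw [hfrob, div_add' _ _ _ (ne_of_gt hsl), le_div_iff₀ hsl]
    rcases max_cases |tau1 ξ| |tau2 ξ| with ⟨he, hge⟩ | ⟨he, hge⟩ <;> rw [he] <;>
      nlinarith [sq_nonneg (|tau1 ξ| - Real.sqrt l), sq_nonneg (|tau2 ξ| - Real.sqrt l),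
        sq_abs (tau1 ξ), sq_abs (tau2 ξ), sq_nonneg (tau1 ξ), sq_nonneg (tau2 ξ)]
end

section
/- Let x, y ∈ ℝ with 0 < |x| and |x| + |y| < √λ. Then the infimum over α, β ∈ (0,1) of β(√λ + (x² + y²/β²)/√λ) + (1-β)·α(√λ + x²/α²/√λ) is at most 2(|x| + |y| - |xy|/√λ); in particular choosing α = |x|/√λ and β = |y|/(√λ - |x|) achieves this value. -/
open Set

theorem stmt14 (l x y : ℝ) (hl : 0 < l) (hx : 0 < |x|)
    (hsum : |x| + |y| < Real.sqrt l) :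
    sInf {z : ℝ | ∃ α ∈ Ioo (0:ℝ) 1, ∃ β ∈ Ioo (0:ℝ) 1,
        z = β * (Real.sqrt l + (x ^ 2 + y ^ 2 / β ^ 2) / Real.sqrt l)
          + (1 - β) * α * (Real.sqrt l + x ^ 2 / α ^ 2 / Real.sqrt l)}
      ≤ 2 * (|x| + |y| - |x * y| / Real.sqrt l) ∧
    (y ≠ 0 →
      |x| / Real.sqrt l ∈ Ioo (0:ℝ) 1 ∧
      |y| / (Real.sqrt l - |x|) ∈ Ioo (0:ℝ) 1 ∧
      (|y| / (Real.sqrt l - |x|)) *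
          (Real.sqrt l + (x ^ 2 + y ^ 2 / (|y| / (Real.sqrt l - |x|)) ^ 2) / Real.sqrt l)
        + (1 - |y| / (Real.sqrt l - |x|)) * (|x| / Real.sqrt l) *
          (Real.sqrt l + x ^ 2 / (|x| / Real.sqrt l) ^ 2 / Real.sqrt l)
      = 2 * (|x| + |y| - |x * y| / Real.sqrt l)) := by
  set s := Real.sqrt l with hsdef
  have hs : 0 < s := Real.sqrt_pos.2 hl
  have hxs : |x| < s := lt_of_le_of_lt (le_add_of_nonneg_right (abs_nonneg y)) hsum
  have hsx : (0:ℝ) < s - |x| := sub_pos.2 hxs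
  have hxne : |x| ≠ 0 := ne_of_gt hx
  have hx' : x ≠ 0 := abs_pos.mp hx
  have hsne : s ≠ 0 := ne_of_gt hs
  have hsxne : s - |x| ≠ 0 := ne_of_gt hsx
  have hbdd : BddBelow {z : ℝ | ∃ α ∈ Ioo (0:ℝ) 1, ∃ β ∈ Ioo (0:ℝ) 1,
        z = β * (s + (x ^ 2 + y ^ 2 / β ^ 2) / s)
          + (1 - β) * α * (s + x ^ 2 / α ^ 2 / s)} := by
    refine ⟨0, ?_⟩
    rintro z ⟨α, hα, β, hβ, rfl⟩
    have h1 : (0:ℝ) ≤ 1 - β := by linarith [hβ.2]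
    have h2 : (0:ℝ) ≤ s + (x ^ 2 + y ^ 2 / β ^ 2) / s := by positivity
    have h3 : (0:ℝ) ≤ s + x ^ 2 / α ^ 2 / s := by positivity
    have := hα.1.le; have := hβ.1.le
    positivity
  have hα0 : |x| / s ∈ Ioo (0:ℝ) 1 :=
    ⟨div_pos hx hs, (div_lt_one hs).2 hxs⟩
  have hαval : (|x| / s) * (s + x ^ 2 / (|x| / s) ^ 2 / s) = 2 * |x| := by
    have hA2 : |x| ^ 2 = x ^ 2 := sq_abs x
    field_simp
    rw [← hA2]
    ring
  have hkey : ∀ (hy : y ≠ 0),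
      |y| / (s - |x|) ∈ Ioo (0:ℝ) 1 ∧
      (|y| / (s - |x|)) * (s + (x ^ 2 + y ^ 2 / (|y| / (s - |x|)) ^ 2) / s)
        + (1 - |y| / (s - |x|)) * (|x| / s) * (s + x ^ 2 / (|x| / s) ^ 2 / s)
      = 2 * (|x| + |y| - |x * y| / s) := by
    intro hy
    have hyy : 0 < |y| := abs_pos.2 hy
    have hyne : |y| ≠ 0 := ne_of_gt hyy
    have hβmem : |y| / (s - |x|) ∈ Ioo (0:ℝ) 1 := by
      refine ⟨div_pos hyy hsx, (div_lt_one hsx).2 ?_⟩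
      linarith
    refine ⟨hβmem, ?_⟩
    rw [abs_mul]
    have hA2 : |x| ^ 2 = x ^ 2 := sq_abs x
    have hB2 : |y| ^ 2 = y ^ 2 := sq_abs y
    have hy' : y ≠ 0 := hy
    field_simp
    rw [← hA2, ← hB2]
    ring
  constructor
  · rcases eq_or_ne y 0 with rfl | hy
    · -- y = 0 case: approach the infimum
      have htarget : 2 * (|x| + |(0:ℝ)| - |x * 0| / s) = 2 * |x| := by
        simp
      rw [htarget]
      refine le_of_forall_pos_le_add ?_
      intro ε hε
      set β : ℝ := min (1/2) (ε / (s + x ^ 2 / s)) with hβdef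
      have hpos : (0:ℝ) < s + x ^ 2 / s := by positivity
      have hβ0 : 0 < β := lt_min (by norm_num) (div_pos hε hpos)
      have hβ1 : β < 1 := lt_of_le_of_lt (min_le_left _ _) (by norm_num)
      have hmem : β * (s + (x ^ 2 + (0:ℝ) ^ 2 / β ^ 2) / s)
          + (1 - β) * (|x| / s) * (s + x ^ 2 / (|x| / s) ^ 2 / s) ∈
          {z : ℝ | ∃ α ∈ Ioo (0:ℝ) 1, ∃ β ∈ Ioo (0:ℝ) 1,
            z = β * (s + (x ^ 2 + (0:ℝ) ^ 2 / β ^ 2) / s)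
              + (1 - β) * α * (s + x ^ 2 / α ^ 2 / s)} :=
        ⟨|x| / s, hα0, β, ⟨hβ0, hβ1⟩, rfl⟩
      refine le_trans (csInf_le hbdd hmem) ?_
      have hrw : (1 - β) * (|x| / s) * (s + x ^ 2 / (|x| / s) ^ 2 / s)
          = (1 - β) * (2 * |x|) := by rw [mul_assoc, hαval]
      rw [hrw]
      have h1 : β * (s + (x ^ 2 + (0:ℝ) ^ 2 / β ^ 2) / s) ≤ ε := by
        have hβle : β ≤ ε / (s + x ^ 2 / s) := min_le_right _ _
        have : β * (s + x ^ 2 / s) ≤ ε := by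
          rw [← div_mul_cancel₀ ε (ne_of_gt hpos)]
          exact mul_le_mul_of_nonneg_right hβle hpos.le
        calc β * (s + (x ^ 2 + (0:ℝ) ^ 2 / β ^ 2) / s)
            = β * (s + x ^ 2 / s) := by rw [zero_pow (by norm_num), zero_div, add_zero]
          _ ≤ ε := this
      have h2 : (1 - β) * (2 * |x|) ≤ 2 * |x| := by
        nlinarith [abs_nonneg x]
      linarith
    · obtain ⟨hβmem, heq⟩ := hkey hy
      have hmem : 2 * (|x| + |y| - |x * y| / s) ∈
          {z : ℝ | ∃ α ∈ Ioo (0:ℝ) 1, ∃ β ∈ Ioo (0:ℝ) 1,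
            z = β * (s + (x ^ 2 + y ^ 2 / β ^ 2) / s)
              + (1 - β) * α * (s + x ^ 2 / α ^ 2 / s)} :=
        ⟨|x| / s, hα0, |y| / (s - |x|), hβmem, heq.symm⟩
      exact csInf_le hbdd hmem
  · intro hy
    obtain ⟨hβmem, heq⟩ := hkey hy
    exact ⟨hα0, hβmem, heq⟩
end
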